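/- Let B be an integral domain of mixed characteristic p > 0, and let B^+ be its absolute integral closure. Let t ∈ B^+ satisfy t^p = p. Then the p-th power map x ↦ x^p induces a ring isomorphism B^+/tB^+ ≅ B^+/pB^+. -/

import Mathlib

open Polynomial in
/-- If `b` is integral over `R` and is an inverse of `algebraMap R S a`,
then `a` is a unit in `R`. -/
lemma isUnit_of_invOf_isIntegral {R S : Type*} [CommRing R] [CommRing S] [Algebra R S]
    (hinj : Function.Injective (algebraMap R S)) {a : R} {b : S}
    (hb : algebraMap R S a * b = 1) (hbint : IsIntegral R b) : IsUnit a := by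
  letI : Invertible b := (Units.mkOfMulEqOne b _ <| mul_comm _ b ▸ hb).invertible
  obtain ⟨p, p_monic, hp⟩ := hbint
  refine IsUnit.of_mul_eq_one (a := a) (-p.reverse.divX.eval a) ?_
  nth_rewrite 1 [mul_neg, ← eval_X (x := a), ← eval_mul, ← p_monic, ← coeff_zero_reverse,
    ← add_eq_zero_iff_neg_eq, ← eval_C (a := p.reverse.coeff 0), ← eval_add, X_mul_divX_add,
    ← (injective_iff_map_eq_zero' _).mp hinj, ← aeval_algebraMap_apply_eq_algebraMap_eval]
  rwa [← eval₂_reverse_eq_zero_iff] at hp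

/-- Abstract version: in a domain `R` where `p` is a nonzero nonunit, every element has
a `p`-th root, `p`-th roots are unique up to `p`-th roots of unity, and `t ^ p = p`,
the `p`-th power map induces `R/t ≃+* R/p`. -/
lemma frobenius_equiv_aux {R : Type*} [CommRing R] [IsDomain R] (p : ℕ) (hp : p.Prime)
    (hpuR : ¬ IsUnit ((p : ℕ) : R)) (hp0 : ((p : ℕ) : R) ≠ 0)
    (hroot : ∀ x : R, ∃ y : R, y ^ p = x)
    (hrootu : ∀ x y : R, x ^ p = y ^ p → y ≠ 0 → ∃ ζ : R, ζ ^ p = 1 ∧ x = ζ * y)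
    (t : R) (ht : t ^ p = ((p : ℕ) : R)) :
    ∃ e : ((R ⧸ Ideal.span {t}) ≃+* (R ⧸ Ideal.span {((p : ℕ) : R)})),
      ∀ x : R, e (Ideal.Quotient.mk _ x) = Ideal.Quotient.mk _ (x ^ p) := by
  haveI : Fact p.Prime := ⟨hp⟩
  haveI : CharP (R ⧸ (Ideal.span ({((p:ℕ) : R)} : Set R) : Ideal R)) p :=
    CharP.quotient R p hpuR
  let g : R →+* R ⧸ (Ideal.span ({((p:ℕ) : R)} : Set R) : Ideal R) :=
    (frobenius _ p).comp (Ideal.Quotient.mk _)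
  have hg : ∀ x : R, g x = Ideal.Quotient.mk _ (x ^ p) := by
    intro x
    simp [g, frobenius_def]
  have hker : Ideal.span ({t} : Set R) ≤ RingHom.ker g := by
    rw [Ideal.span_le, Set.singleton_subset_iff]
    show g t = 0
    rw [hg, ht, Ideal.Quotient.eq_zero_iff_mem]
    exact Ideal.subset_span rfl
  let φ := Ideal.Quotient.lift _ g hker
  have hφ : ∀ x : R, φ (Ideal.Quotient.mk _ x) = Ideal.Quotient.mk _ (x ^ p) := by
    intro x; exact hg x
  have ht0 : t ≠ 0 := by
    intro h; apply hp0; rw [← ht, h, zero_pow hp.ne_zero]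
  have hinj' : Function.Injective φ := by
    rw [injective_iff_map_eq_zero]
    intro a ha
    obtain ⟨x, rfl⟩ := Ideal.Quotient.mk_surjective a
    rw [hφ, Ideal.Quotient.eq_zero_iff_mem, Ideal.mem_span_singleton] at ha
    obtain ⟨z, hz⟩ := ha
    rw [Ideal.Quotient.eq_zero_iff_mem, Ideal.mem_span_singleton]
    obtain ⟨w, hw⟩ := hroot z
    by_cases hw0 : w = 0
    · subst hw0
      have : x ^ p = 0 := by rw [hz, ← hw, zero_pow hp.ne_zero, mul_zero]
      rw [pow_eq_zero_iff hp.ne_zero] at this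
      exact ⟨0, by rw [this, mul_zero]⟩
    have hxp : x ^ p = (t * w) ^ p := by
      rw [mul_pow, hw, ht, hz]
    obtain ⟨ζ, hζ1, hζ2⟩ := hrootu x (t * w) hxp (mul_ne_zero ht0 hw0)
    exact ⟨ζ * w, by rw [hζ2]; ring⟩
  have hsurj : Function.Surjective φ := by
    intro a
    obtain ⟨x, rfl⟩ := Ideal.Quotient.mk_surjective a
    obtain ⟨y, hy⟩ := hroot x
    exact ⟨Ideal.Quotient.mk _ y, by rw [hφ, hy]⟩
  exact ⟨RingEquiv.ofBijective φ ⟨hinj', hsurj⟩, hφ⟩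

/-- Let `B` be an integral domain of mixed characteristic `p > 0` with absolute integral
closure `B⁺`, and let `t ∈ B⁺` satisfy `t ^ p = p`. Then the `p`-th power map `x ↦ x ^ p`
induces a ring isomorphism `B⁺/tB⁺ ≃ B⁺/pB⁺`. -/
theorem frobenius_equiv_mod_p_root
    (B : Type) [CommRing B] [IsDomain B] (p : ℕ) (hp : p.Prime)
    [CharZero B] (hpu : ¬ IsUnit (p : B))
    (t : integralClosure B (AlgebraicClosure (FractionRing B)))
    (ht : t ^ p = (p : integralClosure B (AlgebraicClosure (FractionRing B)))) :
    ∃ e : ((integralClosure B (AlgebraicClosure (FractionRing B)) ⧸ Ideal.span {t}) ≃+*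
        (integralClosure B (AlgebraicClosure (FractionRing B)) ⧸
          Ideal.span {(p : integralClosure B (AlgebraicClosure (FractionRing B)))})),
      ∀ x : integralClosure B (AlgebraicClosure (FractionRing B)),
        e (Ideal.Quotient.mk _ x) = Ideal.Quotient.mk _ (x ^ p) := by
  have hinj : Function.Injective (algebraMap B (AlgebraicClosure (FractionRing B))) := by
    have : (algebraMap B (AlgebraicClosure (FractionRing B))) =
        (algebraMap (FractionRing B) (AlgebraicClosure (FractionRing B))).comp
          (algebraMap B (FractionRing B)) := by
      ext x
      simp [IsScalarTower.algebraMap_apply B (FractionRing B)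
        (AlgebraicClosure (FractionRing B))]
    rw [this]
    exact (algebraMap (FractionRing B) (AlgebraicClosure (FractionRing B))).injective.comp
      (IsFractionRing.injective B (FractionRing B))
  refine frobenius_equiv_aux p hp ?_ ?hp0 ?_ ?_ t ht
  case hp0 =>
    intro h
    have h2 : ((p : ℕ) : AlgebraicClosure (FractionRing B)) = 0 := by
      exact_mod_cast congrArg Subtype.val h
    exact (Nat.cast_ne_zero.mpr hp.ne_zero :
      ((p : ℕ) : AlgebraicClosure (FractionRing B)) ≠ 0) h2
  · -- p is not a unit
    intro h
    obtain ⟨u, hu⟩ := isUnit_iff_exists_inv.mp h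
    apply hpu
    refine isUnit_of_invOf_isIntegral hinj
      (b := (u : AlgebraicClosure (FractionRing B))) ?_ u.2
    have := congrArg (Subtype.val) hu
    push_cast at this ⊢
    simpa using this
  · -- p-th roots exist
    intro x
    obtain ⟨y, hy⟩ := IsAlgClosed.exists_pow_nat_eq
      (x : AlgebraicClosure (FractionRing B)) hp.pos
    have hyint : IsIntegral B y := by
      refine IsIntegral.of_pow hp.pos ?_
      rw [hy]; exact x.2
    exact ⟨⟨y, hyint⟩, Subtype.ext hy⟩
  · -- roots unique up to roots of unity
    intro x y hxy hy0
    have hy0' : (y : AlgebraicClosure (FractionRing B)) ≠ 0 := fun h => hy0 (Subtype.ext h)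
    set ζ : AlgebraicClosure (FractionRing B) := (x : _) / (y : _) with hζ
    have hζp : ζ ^ p = 1 := by
      rw [hζ, div_pow, div_eq_one_iff_eq (pow_ne_zero _ hy0')]
      exact_mod_cast congrArg Subtype.val hxy
    have hζint : IsIntegral B ζ := by
      refine IsIntegral.of_pow hp.pos ?_
      rw [hζp]; exact isIntegral_one
    refine ⟨⟨ζ, hζint⟩, Subtype.ext hζp, Subtype.ext ?_⟩
    push_cast
    rw [hζ]
    field_simp
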